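/- With ∇⁰ as above on a quadratic Lie algebra d, the divergence of ∇⁰ vanishes: for every y ∈ d, Σ_α ⟨∇⁰_{t_α} y, t^α⟩ = 0, where {t_α} is any basis of d and {t^α} the dual basis with respect to ⟨·,·⟩_d (i.e. the trace of the map x ↦ ∇⁰_x y, computed via the metric, is zero). -/

import Mathlib

set_option linter.unusedSectionVars false

section aux
variable {d : Type*} [AddCommGroup d] [Module ℝ d] [FiniteDimensional ℝ d]
  (B : LinearMap.BilinForm ℝ d)
  {ι : Type*} [Fintype ι] [DecidableEq ι] (b : Module.Basis ι ℝ d) (db : ι → d)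

lemma aux_trace (hsymm : ∀ x y : d, B x y = B y x)
    (hdb : ∀ i j : ι, B (db i) (b j) = if i = j then 1 else 0)
    (f : d →ₗ[ℝ] d) :
    ∑ i, B (f (b i)) (db i) = LinearMap.trace ℝ d f := by
  rw [LinearMap.trace_eq_matrix_trace ℝ b, Matrix.trace]
  apply Finset.sum_congr rfl
  intro i _
  have hfun : (B (db i) : d →ₗ[ℝ] ℝ) = b.coord i := by
    apply b.ext
    intro j
    simp only [hdb i j, Module.Basis.coord_apply, Module.Basis.repr_self, Finsupp.single_apply]
    by_cases h : i = j <;> simp [h, eq_comm]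
  rw [hsymm]
  have := congrArg (fun g : d →ₗ[ℝ] ℝ => g (f (b i))) hfun
  simpa [Matrix.diag, LinearMap.toMatrix_apply, Module.Basis.coord_apply] using this

lemma aux_swap (hsymm : ∀ x y : d, B x y = B y x)
    (hdb : ∀ i j : ι, B (db i) (b j) = if i = j then 1 else 0)
    (h : d →ₗ[ℝ] d) :
    ∑ i, B (h (db i)) (b i) = ∑ i, B (h (b i)) (db i) := by
  have key : ∀ i (v : d), B (db i) v = b.repr v i := by
    intro i v
    have hfun : (B (db i) : d →ₗ[ℝ] ℝ) = b.coord i := by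
      apply b.ext
      intro j
      simp only [hdb i j, Module.Basis.coord_apply, Module.Basis.repr_self, Finsupp.single_apply]
      by_cases hij : i = j <;> simp [hij, eq_comm]
    have := congrArg (fun g : d →ₗ[ℝ] ℝ => g v) hfun
    simpa [Module.Basis.coord_apply] using this
  have hc : ∀ i j, b.repr (db i) j = b.repr (db j) i := by
    intro i j
    rw [← key j (db i), ← key i (db j), hsymm]
  have expand : ∀ i, db i = ∑ j, b.repr (db i) j • b j := by
    intro i; rw [b.sum_repr (db i)]
  calc ∑ i, B (h (db i)) (b i)
      = ∑ i, ∑ j, b.repr (db i) j * B (h (b j)) (b i) := by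
        apply Finset.sum_congr rfl; intro i _
        conv_lhs => rw [expand i]
        simp [Finset.mul_sum, map_sum, -Module.Basis.sum_repr]
    _ = ∑ j, ∑ i, b.repr (db i) j * B (h (b j)) (b i) := Finset.sum_comm
    _ = ∑ j, ∑ i, b.repr (db j) i * B (h (b j)) (b i) := by
        apply Finset.sum_congr rfl; intro j _
        apply Finset.sum_congr rfl; intro i _
        rw [hc]
    _ = ∑ i, B (h (b i)) (db i) := by
        apply Finset.sum_congr rfl; intro j _
        conv_rhs => rw [expand j]
        simp [map_sum, -Module.Basis.sum_repr]

lemma aux_skew (hsymm : ∀ x y : d, B x y = B y x)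
    (hdb : ∀ i j : ι, B (db i) (b j) = if i = j then 1 else 0)
    (f : d →ₗ[ℝ] d) (hf : ∀ x z : d, B (f x) z = - B x (f z)) :
    ∑ i, B (f (b i)) (db i) = 0 := by
  have h1 : ∑ i, B (f (b i)) (db i) = - ∑ i, B (f (db i)) (b i) := by
    rw [← Finset.sum_neg_distrib]
    apply Finset.sum_congr rfl; intro i _
    rw [hf, hsymm]
  have h2 := aux_swap B b db hsymm hdb f
  rw [h2] at h1
  linarith

end aux



/-- With `∇⁰` as above on a quadratic Lie algebra `d`, the
divergence of `∇⁰` vanishes: for every `y`, `Σ_α ⟨∇⁰_{t_α} y, t^α⟩ = 0`, where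
`{t_α}` is any basis of `d` and `{t^α}` the dual basis with respect to `⟨·,·⟩_d`. -/
theorem stmt_12 {d : Type*} [LieRing d] [LieAlgebra ℝ d] [FiniteDimensional ℝ d]
    (B : LinearMap.BilinForm ℝ d)
    (hsymm : ∀ x y : d, B x y = B y x)
    (hnd : B.Nondegenerate)
    (hinv : ∀ x y z : d, B ⁅x, y⁆ z + B y ⁅x, z⁆ = 0)
    (pr : d →ₗ[ℝ] d) (hproj : ∀ x : d, pr (pr x) = pr x)
    (horth : ∀ x y : d, B (pr x) (y - pr y) = 0)
    (hpos : ∀ x : d, pr x = x → x ≠ 0 → 0 < B x x)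
    (hneg : ∀ x : d, pr x = 0 → x ≠ 0 → B x x < 0)
    (N : d → d → d)
    (hN : ∀ x y z : d, B (N x y) z =
      - B ⁅pr x, y - pr y⁆ (z - pr z) - B ⁅x - pr x, pr y⁆ (pr z)
      - (1/3 : ℝ) * B ⁅pr x, pr y⁆ (pr z)
      - (1/3 : ℝ) * B ⁅x - pr x, y - pr y⁆ (z - pr z))
    {ι : Type*} [Fintype ι] [DecidableEq ι] (b : Module.Basis ι ℝ d) (db : ι → d)
    (hdb : ∀ i j : ι, B (db i) (b j) = if i = j then 1 else 0)
:
    ∀ y : d, ∑ i, B (N (b i) y) (db i) = 0 := by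
  intro y
  -- pr is self-adjoint
  have prsa : ∀ x z : d, B (pr x) z = B x (pr z) := by
    intro x z
    have h1 : B (pr x) z = B (pr x) (pr z) := by
      have := horth x z
      have : B (pr x) z - B (pr x) (pr z) = 0 := by
        simpa [map_sub] using this
      linarith
    have h2 : B x (pr z) = B (pr x) (pr z) := by
      rw [hsymm]
      have := horth z x
      have : B (pr z) x - B (pr z) (pr x) = 0 := by
        simpa [map_sub] using this
      have h3 : B (pr z) x = B (pr z) (pr x) := by linarith
      rw [h3, hsymm]
    rw [h1, h2]
  set q : d →ₗ[ℝ] d := LinearMap.id - pr with hq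
  have hqx : ∀ x : d, q x = x - pr x := by
    intro x; simp [hq]
  have qsa : ∀ x z : d, B (q x) z = B x (q z) := by
    intro x z
    rw [hqx, hqx, map_sub, LinearMap.sub_apply, prsa]
    simp [map_sub]
  -- ad skewness
  have adsk : ∀ c a b' : d, B ⁅c, a⁆ b' = - B a ⁅c, b'⁆ := by
    intro c a b'
    have := hinv c a b'
    linarith
  set c1 : d := y - pr y with hc1
  set c2 : d := pr y with hc2
  set ad1 : d →ₗ[ℝ] d := LieAlgebra.ad ℝ d c1 with had1
  set ad2 : d →ₗ[ℝ] d := LieAlgebra.ad ℝ d c2 with had2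
  have ad1x : ∀ x : d, ad1 x = ⁅c1, x⁆ := by intro x; rw [had1, LieAlgebra.ad_apply]
  have ad2x : ∀ x : d, ad2 x = ⁅c2, x⁆ := by intro x; rw [had2, LieAlgebra.ad_apply]
  set F1 : d →ₗ[ℝ] d := q ∘ₗ (ad1 ∘ₗ pr) with hF1
  set F2 : d →ₗ[ℝ] d := pr ∘ₗ (ad2 ∘ₗ q) with hF2
  set F3 : d →ₗ[ℝ] d := (1/3 : ℝ) • (pr ∘ₗ (ad2 ∘ₗ pr)) with hF3
  set F4 : d →ₗ[ℝ] d := (1/3 : ℝ) • (q ∘ₗ (ad1 ∘ₗ q)) with hF4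
  -- pointwise decomposition
  have negB : ∀ u v : d, B (-u) v = - B u v := by
    intro u v; simp
  have hdecomp : ∀ x z : d,
      B (N x y) z = B (F1 x) z + B (F2 x) z + B (F3 x) z + B (F4 x) z := by
    intro x z
    have e1 : - B ⁅pr x, c1⁆ (z - pr z) = B (F1 x) z := by
      have l1 : (⁅pr x, c1⁆ : d) = - ⁅c1, pr x⁆ := (lie_skew _ _).symm
      have h2 : (z - pr z : d) = q z := (hqx z).symm
      rw [l1, negB, neg_neg, h2, ← qsa, hF1]
      simp [LinearMap.comp_apply, ad1x]
    have e2 : - B ⁅x - pr x, c2⁆ (pr z) = B (F2 x) z := by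
      have l1 : (⁅x - pr x, c2⁆ : d) = - ⁅c2, x - pr x⁆ := (lie_skew _ _).symm
      have h2 : (x - pr x : d) = q x := (hqx x).symm
      rw [l1, negB, neg_neg, ← prsa, h2, hF2]
      simp [LinearMap.comp_apply, ad2x]
    have e3 : - (1/3 : ℝ) * B ⁅pr x, c2⁆ (pr z) = B (F3 x) z := by
      have l1 : (⁅pr x, c2⁆ : d) = - ⁅c2, pr x⁆ := (lie_skew _ _).symm
      have hf3 : B (F3 x) z = (1/3 : ℝ) * B (pr ⁅c2, pr x⁆) z := by
        rw [hF3]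
        simp [LinearMap.smul_apply, LinearMap.comp_apply, ad2x]
      rw [l1, negB, hf3, ← prsa]
      ring
    have e4 : - (1/3 : ℝ) * B ⁅x - pr x, c1⁆ (z - pr z) = B (F4 x) z := by
      have l1 : (⁅x - pr x, c1⁆ : d) = - ⁅c1, x - pr x⁆ := (lie_skew _ _).symm
      have h2 : (z - pr z : d) = q z := (hqx z).symm
      have h3 : (x - pr x : d) = q x := (hqx x).symm
      have hf4 : B (F4 x) z = (1/3 : ℝ) * B (q ⁅c1, q x⁆) z := by
        rw [hF4]
        simp [LinearMap.smul_apply, LinearMap.comp_apply, ad1x]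
      rw [l1, negB, hf4, h3, h2, ← qsa]
      ring
    rw [hN x y z, ← hc1, ← hc2]
    rw [← e1, ← e2, ← e3, ← e4]
    ring
  -- split the sum
  have hsplit : ∑ i, B (N (b i) y) (db i) =
      (∑ i, B (F1 (b i)) (db i)) + (∑ i, B (F2 (b i)) (db i))
      + (∑ i, B (F3 (b i)) (db i)) + (∑ i, B (F4 (b i)) (db i)) := by
    rw [← Finset.sum_add_distrib, ← Finset.sum_add_distrib, ← Finset.sum_add_distrib]
    exact Finset.sum_congr rfl fun i _ => hdecomp (b i) (db i)
  -- F1, F2 have zero trace since pr ∘ q = 0 = q ∘ pr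
  have hprq : pr ∘ₗ q = 0 := by
    apply LinearMap.ext; intro x
    simp [hqx, map_sub, hproj]
  have hqpr : q ∘ₗ pr = 0 := by
    apply LinearMap.ext; intro x
    simp [hqx, hproj]
  have hS1 : ∑ i, B (F1 (b i)) (db i) = 0 := by
    rw [aux_trace B b db hsymm hdb F1, hF1]
    rw [LinearMap.trace_comp_comm' (ad1 ∘ₗ pr) q, LinearMap.comp_assoc, hprq]
    simp
  have hS2 : ∑ i, B (F2 (b i)) (db i) = 0 := by
    rw [aux_trace B b db hsymm hdb F2, hF2]
    rw [LinearMap.trace_comp_comm' (ad2 ∘ₗ q) pr, LinearMap.comp_assoc, hqpr]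
    simp
  have hS3 : ∑ i, B (F3 (b i)) (db i) = 0 := by
    apply aux_skew B b db hsymm hdb
    intro x z
    have hx : B (F3 x) z = (1/3 : ℝ) * B ⁅c2, pr x⁆ (pr z) := by
      rw [hF3]
      simp only [LinearMap.smul_apply, LinearMap.comp_apply, ad2x, map_smul,
        smul_eq_mul]
      rw [prsa]
    have hz : B x (F3 z) = (1/3 : ℝ) * B (pr x) ⁅c2, pr z⁆ := by
      rw [hF3]
      simp only [LinearMap.smul_apply, LinearMap.comp_apply, ad2x, map_smul,
        smul_eq_mul]
      rw [hsymm x, prsa, hsymm]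
    rw [hx, hz, adsk]
    ring
  have hS4 : ∑ i, B (F4 (b i)) (db i) = 0 := by
    apply aux_skew B b db hsymm hdb
    intro x z
    have hx : B (F4 x) z = (1/3 : ℝ) * B ⁅c1, q x⁆ (q z) := by
      rw [hF4]
      simp only [LinearMap.smul_apply, LinearMap.comp_apply, ad1x, map_smul,
        smul_eq_mul]
      rw [qsa]
    have hz : B x (F4 z) = (1/3 : ℝ) * B (q x) ⁅c1, q z⁆ := by
      rw [hF4]
      simp only [LinearMap.smul_apply, LinearMap.comp_apply, ad1x, map_smul,
        smul_eq_mul]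
      rw [hsymm x, qsa, hsymm]
    rw [hx, hz, adsk]
    ring
  rw [hsplit, hS1, hS2, hS3, hS4]
  ring
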